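/- For every positive integer k, there exists a binary linear code of dimension k with exactly 2^k - 1 distinct nonzero weights, i.e., all nonzero codewords have pairwise distinct Hamming weights. -/

import Mathlib

open Finset

private lemma log2_fiber_card (k i : ℕ) (hi : i < k) :
    ((Finset.range (2 ^ k - 1)).filter (fun m => Nat.log2 (m + 1) = i)).card = 2 ^ i := by
  have hpow : (2:ℕ) ^ (i + 1) ≤ 2 ^ k := Nat.pow_le_pow_right (by norm_num) hi
  have h2i : (1:ℕ) ≤ 2 ^ i := Nat.one_le_two_pow
  have hsucc : (2:ℕ) ^ (i + 1) = 2 * 2 ^ i := by ring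
  have hset : (Finset.range (2 ^ k - 1)).filter (fun m => Nat.log2 (m + 1) = i)
      = Finset.Ico (2 ^ i - 1) (2 ^ (i + 1) - 1) := by
    ext m
    simp only [mem_filter, mem_range, mem_Ico, Nat.log2_eq_log_two]
    constructor
    · rintro ⟨hm, hlog⟩
      have h1 : 2 ^ i ≤ m + 1 := hlog ▸ Nat.pow_log_le_self 2 (Nat.succ_ne_zero m)
      have h2 : m + 1 < 2 ^ (Nat.log 2 (m + 1) + 1) :=
        Nat.lt_pow_succ_log_self (by norm_num) (m + 1)
      rw [hlog] at h2
      omega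
    · rintro ⟨h1, h2⟩
      have hp1 : 2 ^ i ≤ m + 1 := by omega
      have hp2 : m + 1 < 2 ^ (i + 1) := by omega
      exact ⟨by omega, Nat.log_eq_of_pow_le_of_lt_pow hp1 hp2⟩
  rw [hset, Nat.card_Ico]
  omega

private lemma zmod2_eq_of_ne_zero_iff {a b : ZMod 2} (h : a ≠ 0 ↔ b ≠ 0) : a = b := by
  revert h; revert a b; decide

theorem binary_MWS_exists (k : ℕ) (hk : 1 ≤ k) :
    ∃ (n : ℕ) (C : Submodule (ZMod 2) (Fin n → ZMod 2)), Module.finrank (ZMod 2) C = k ∧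
      {w : ℕ | ∃ c ∈ C, c ≠ 0 ∧ hammingNorm c = w}.ncard = 2 ^ k - 1 ∧
      ∀ c₁ ∈ C, ∀ c₂ ∈ C, c₁ ≠ 0 → c₂ ≠ 0 →
        hammingNorm c₁ = hammingNorm c₂ → c₁ = c₂ := by
  classical
  set n := 2 ^ k - 1 with hn
  have hfval : ∀ j : Fin n, Nat.log2 (j.val + 1) < k := by
    intro j
    have hj : j.val + 1 < 2 ^ k := by have := j.2; omega
    exact (Nat.log2_lt (Nat.succ_ne_zero _)).2 hj
  set f : Fin n → Fin k := fun j => ⟨Nat.log2 (j.val + 1), hfval j⟩ with hf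
  have hfsurj : Function.Surjective f := by
    intro i
    have hlt : 2 ^ i.val - 1 < n := by
      have h1 : (2:ℕ) ^ i.val < 2 ^ k := Nat.pow_lt_pow_right (by norm_num) i.2
      have h2 : (1:ℕ) ≤ 2 ^ i.val := Nat.one_le_two_pow
      omega
    refine ⟨⟨2 ^ i.val - 1, hlt⟩, ?_⟩
    have h2 : (1:ℕ) ≤ 2 ^ i.val := Nat.one_le_two_pow
    apply Fin.ext
    simp only [hf]
    show Nat.log2 (2 ^ i.val - 1 + 1) = i.val
    rw [Nat.sub_add_cancel h2, Nat.log2_eq_log_two]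
    exact Nat.log_pow (by norm_num) _
  set φ : (Fin k → ZMod 2) →ₗ[ZMod 2] (Fin n → ZMod 2) :=
    LinearMap.funLeft (ZMod 2) (ZMod 2) f with hφ
  have hφinj : Function.Injective φ :=
    LinearMap.funLeft_injective_of_surjective (ZMod 2) (ZMod 2) f hfsurj
  -- weight formula
  have hweight : ∀ x : Fin k → ZMod 2,
      hammingNorm (φ x) = ∑ i ∈ Finset.univ.filter (fun i : Fin k => x i ≠ 0), 2 ^ i.val := by
    intro x
    have happ : ∀ j, φ x j = x (f j) := fun j => rfl
    rw [hammingNorm]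
    rw [Finset.card_eq_sum_card_fiberwise
      (f := f) (t := Finset.univ.filter (fun i : Fin k => x i ≠ 0))
      (by intro j hj; simp only [mem_coe, mem_filter, mem_univ, true_and] at hj ⊢; exact hj)]
    refine Finset.sum_congr rfl ?_
    intro i hi
    simp only [mem_filter, mem_univ, true_and] at hi
    have hfib : (Finset.univ.filter (fun j : Fin n => φ x j ≠ 0)).filter (fun j => f j = i)
        = Finset.univ.filter (fun j : Fin n => f j = i) := by
      ext j
      simp only [mem_filter, mem_univ, true_and, happ]
      constructor
      · rintro ⟨_, h⟩; exact h
      · intro h; exact ⟨h ▸ hi, h⟩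
    rw [hfib]
    -- count the fiber via the range
    have : (Finset.univ.filter (fun j : Fin n => f j = i)).card
        = ((Finset.range n).filter (fun m => Nat.log2 (m + 1) = i.val)).card := by
      rw [Finset.card_filter, Finset.card_filter]
      calc (∑ j : Fin n, if f j = i then (1:ℕ) else 0)
          = ∑ j : Fin n, (if Nat.log2 (j.val + 1) = i.val then (1:ℕ) else 0) := by
            refine Finset.sum_congr rfl fun j _ => ?_
            congr 1
            simp only [hf, eq_iff_iff]
            exact ⟨fun h => congrArg Fin.val h, fun h => Fin.ext h⟩
        _ = ∑ m ∈ Finset.range n, if Nat.log2 (m + 1) = i.val then (1:ℕ) else 0 :=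
            Fin.sum_univ_eq_sum_range (fun m => if Nat.log2 (m + 1) = i.val then (1:ℕ) else 0) n
    rw [this, hn, log2_fiber_card k i.val i.2]
  have hwinj : Function.Injective
      (fun x : Fin k → ZMod 2 => ∑ i ∈ Finset.univ.filter (fun i : Fin k => x i ≠ 0), 2 ^ i.val) := by
    intro x y hxy
    simp only at hxy
    have hx : ∀ z : Fin k → ZMod 2,
        ∑ i ∈ Finset.univ.filter (fun i : Fin k => z i ≠ 0), 2 ^ i.val
        = ∑ m ∈ (Finset.univ.filter (fun i : Fin k => z i ≠ 0)).image Fin.val, 2 ^ m := by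
      intro z
      rw [Finset.sum_image (fun a _ b _ h => Fin.val_injective h)]
    rw [hx x, hx y] at hxy
    have himg := Finset.geomSum_injective (n := 2) le_rfl hxy
    have hsets : Finset.univ.filter (fun i : Fin k => x i ≠ 0)
        = Finset.univ.filter (fun i : Fin k => y i ≠ 0) :=
      Finset.image_injective Fin.val_injective himg
    funext i
    apply zmod2_eq_of_ne_zero_iff
    have := Finset.ext_iff.1 hsets i
    simpa using this
  refine ⟨n, LinearMap.range φ, ?_, ?_, ?_⟩
  · -- finrank
    have e : (Fin k → ZMod 2) ≃ₗ[ZMod 2] LinearMap.range φ := LinearEquiv.ofInjective φ hφinj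
    rw [← e.finrank_eq]
    simp [Module.finrank_pi]
  · -- ncard of weight set
    have e : (Fin k → ZMod 2) ≃ₗ[ZMod 2] LinearMap.range φ := LinearEquiv.ofInjective φ hφinj
    have hcard : Nat.card (LinearMap.range φ) = 2 ^ k := by
      rw [← Nat.card_congr e.toEquiv]
      simp [Nat.card_eq_fintype_card]
    have hinjOn : Set.InjOn hammingNorm ((LinearMap.range φ : Set (Fin n → ZMod 2)) \ {0}) := by
      rintro c₁ ⟨hc₁, _⟩ c₂ ⟨hc₂, _⟩ hnorm
      obtain ⟨x₁, rfl⟩ := hc₁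
      obtain ⟨x₂, rfl⟩ := hc₂
      rw [hweight, hweight] at hnorm
      exact congrArg φ (hwinj hnorm)
    have hseteq : {w : ℕ | ∃ c ∈ LinearMap.range φ, c ≠ 0 ∧ hammingNorm c = w}
        = hammingNorm '' ((LinearMap.range φ : Set (Fin n → ZMod 2)) \ {0}) := by
      ext w
      simp only [Set.mem_setOf_eq, Set.mem_image, Set.mem_diff, Set.mem_singleton_iff,
        SetLike.mem_coe]
      constructor
      · rintro ⟨c, hc, hc0, hw⟩; exact ⟨c, ⟨hc, hc0⟩, hw⟩
      · rintro ⟨c, ⟨hc, hc0⟩, hw⟩; exact ⟨c, hc, hc0, hw⟩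
    rw [hseteq, Set.ncard_image_of_injOn hinjOn]
    have h0 : (0 : Fin n → ZMod 2) ∈ (LinearMap.range φ : Set (Fin n → ZMod 2)) :=
      (LinearMap.range φ).zero_mem
    rw [Set.ncard_diff_singleton_of_mem h0]
    have hC : (↑(LinearMap.range φ) : Set (Fin n → ZMod 2)).ncard = 2 ^ k := by
      rw [← Nat.card_coe_set_eq, ← hcard]
      rfl
    omega
  · -- distinct weights
    intro c₁ hc₁ c₂ hc₂ h₁ h₂ hnorm
    obtain ⟨x₁, rfl⟩ := hc₁
    obtain ⟨x₂, rfl⟩ := hc₂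
    rw [hweight, hweight] at hnorm
    exact congrArg φ (hwinj hnorm)
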